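/- Let Γ be a finitely generated abelian group. Give the group Hom(Γ, ℝ/ℤ) of all group homomorphisms from Γ to the circle ℝ/ℤ the topology of pointwise convergence. Then the restriction map Hom(Γ, ℝ/ℤ) → Hom(Tor Γ, ℝ/ℤ), f ↦ f|_{Tor Γ}, is surjective, its kernel is the connected component of the identity, and hence it induces a group isomorphism from the group of connected components of Hom(Γ, ℝ/ℤ) onto Hom(Tor Γ, ℝ/ℤ). -/

import Mathlib

section Aux

variable (Γ : Type*) [AddCommGroup Γ] [AddGroup.FG Γ]

lemma aux_retraction : ∃ r : Γ →+ (AddCommGroup.torsion Γ),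
    ∀ x : AddCommGroup.torsion Γ, r x = x := by
  haveI : Module.Finite ℤ Γ := Module.Finite.iff_addGroup_fg.mpr ‹_›
  set Tm := Submodule.torsion ℤ Γ with hTm
  haveI : Module.Free ℤ (Γ ⧸ Tm) := Module.free_of_finite_type_torsion_free'
  obtain ⟨s, hs⟩ := Module.projective_lifting_property Tm.mkQ LinearMap.id Tm.mkQ_surjective
  have hmk : ∀ q : Γ ⧸ Tm, Tm.mkQ (s q) = q := fun q => congrArg (fun m => m q) hs
  have hmem : ∀ x : Γ, x - s (Tm.mkQ x) ∈ AddCommGroup.torsion Γ := by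
    intro x
    rw [← Submodule.torsion_int, Submodule.mem_toAddSubgroup]
    rw [← Submodule.Quotient.mk_eq_zero]
    have : Tm.mkQ (x - s (Tm.mkQ x)) = 0 := by
      rw [map_sub, hmk]; simp
    simpa [Submodule.mkQ_apply] using this
  refine ⟨{ toFun := fun x => ⟨x - s (Tm.mkQ x), hmem x⟩,
            map_zero' := by ext; simp,
            map_add' := fun a b => by ext; push_cast; simp [map_add]; abel }, ?_⟩
  intro x
  have hx : (x : Γ) ∈ Tm := by
    rw [← Submodule.mem_toAddSubgroup, Submodule.torsion_int]; exact x.2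
  ext
  simp only [AddMonoidHom.coe_mk, ZeroHom.coe_mk]
  have : Tm.mkQ (x : Γ) = 0 := by rwa [Submodule.mkQ_apply, Submodule.Quotient.mk_eq_zero]
  rw [this, map_zero, sub_zero]

lemma aux_lift (f : Γ →+ AddCircle (1 : ℝ))
    (hf : ∀ x ∈ AddCommGroup.torsion Γ, f x = 0) :
    ∃ g : Γ →+ ℝ, ∀ x : Γ, ((g x : ℝ) : AddCircle (1 : ℝ)) = f x := by
  haveI : Module.Finite ℤ Γ := Module.Finite.iff_addGroup_fg.mpr ‹_›
  set Tm := Submodule.torsion ℤ Γ with hTm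
  haveI : Module.Free ℤ (Γ ⧸ Tm) := Module.free_of_finite_type_torsion_free'
  have hker : Tm ≤ LinearMap.ker f.toIntLinearMap := by
    intro x hx
    simp only [LinearMap.mem_ker, AddMonoidHom.coe_toIntLinearMap]
    exact hf x (by rw [← Submodule.torsion_int, Submodule.mem_toAddSubgroup]; exact hx)
  let fQ := Tm.liftQ f.toIntLinearMap hker
  let π : ℝ →ₗ[ℤ] AddCircle (1 : ℝ) :=
    (QuotientAddGroup.mk' (AddSubgroup.zmultiples (1 : ℝ))).toIntLinearMap
  have hπ : Function.Surjective π := QuotientAddGroup.mk'_surjective _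
  obtain ⟨h, hh⟩ := Module.projective_lifting_property π fQ hπ
  refine ⟨(h.comp Tm.mkQ).toAddMonoidHom, fun x => ?_⟩
  have h1 : π (h (Tm.mkQ x)) = fQ (Tm.mkQ x) := congrArg (fun m => m (Tm.mkQ x)) hh
  have h2 : fQ (Tm.mkQ x) = f x := by simp [fQ]
  simpa [π] using h1.trans h2

end Aux

/-- Let `Γ` be a finitely generated abelian group.  Give `Hom(Γ, ℝ/ℤ)` the
topology of pointwise convergence.  Then the restriction map
`Hom(Γ, ℝ/ℤ) → Hom(Tor Γ, ℝ/ℤ)` is surjective, its kernel is the connected component of the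
identity, and hence it induces a group isomorphism from the group of connected components of
`Hom(Γ, ℝ/ℤ)` onto `Hom(Tor Γ, ℝ/ℤ)`. -/
theorem stmt_6 (Γ : Type*) [AddCommGroup Γ] [AddGroup.FG Γ] :
    ∃ ρ : (Γ →+ AddCircle (1 : ℝ)) →+ ((AddCommGroup.torsion Γ) →+ AddCircle (1 : ℝ)),
      (∀ (f : Γ →+ AddCircle (1 : ℝ)) (x : AddCommGroup.torsion Γ), ρ f x = f x) ∧
      Function.Surjective ρ ∧
      (letI : TopologicalSpace (Γ →+ AddCircle (1 : ℝ)) :=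
          TopologicalSpace.induced (fun f => (f : Γ → AddCircle (1 : ℝ))) inferInstance;
        (ρ.ker : Set (Γ →+ AddCircle (1 : ℝ))) = connectedComponent 0) ∧
      ∃ e : ((Γ →+ AddCircle (1 : ℝ)) ⧸ ρ.ker) ≃+
          ((AddCommGroup.torsion Γ) →+ AddCircle (1 : ℝ)),
        ∀ f : Γ →+ AddCircle (1 : ℝ), e (QuotientAddGroup.mk f) = ρ f := by
  classical
  set T := AddCircle (1 : ℝ) with hT
  let ρ : (Γ →+ T) →+ ((AddCommGroup.torsion Γ) →+ T) :=
    { toFun := fun f => f.comp (AddCommGroup.torsion Γ).subtype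
      map_zero' := rfl
      map_add' := fun f g => rfl }
  have hρapp : ∀ (f : Γ →+ T) (x : AddCommGroup.torsion Γ), ρ f x = f x := fun f x => rfl
  have hsurj : Function.Surjective ρ := by
    obtain ⟨r, hr⟩ := aux_retraction Γ
    intro φ
    refine ⟨φ.comp r, ?_⟩
    ext x
    simp [hρapp, hr x]
  refine ⟨ρ, hρapp, hsurj, ?_, ?_⟩
  · letI τ : TopologicalSpace (Γ →+ T) :=
      TopologicalSpace.induced (fun f => (f : Γ → T)) inferInstance
    show (ρ.ker : Set (Γ →+ T)) = connectedComponent 0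
    have hcoe : Continuous fun f : Γ →+ T => (f : Γ → T) := continuous_induced_dom
    apply Set.Subset.antisymm
    · -- ker ⊆ connectedComponent 0
      intro f hf
      have hf0 : ∀ x ∈ AddCommGroup.torsion Γ, f x = 0 := by
        intro x hx
        have := congrArg (fun ψ => ψ ⟨x, hx⟩) (AddMonoidHom.mem_ker.mp hf)
        simpa [hρapp] using this
      obtain ⟨g, hg⟩ := aux_lift Γ f hf0
      let Φ : ℝ → (Γ →+ T) := fun t =>
        { toFun := fun x => ((t * g x : ℝ) : T)
          map_zero' := by simp
          map_add' := fun a b => by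
            show ((t * g (a + b) : ℝ) : AddCircle (1:ℝ)) = ((t * g a : ℝ) : AddCircle (1:ℝ)) + ((t * g b : ℝ) : AddCircle (1:ℝ))
            rw [map_add, mul_add]
            exact AddCircle.coe_add (p := (1:ℝ)) _ _ }
      have hΦ : Continuous Φ := by
        rw [continuous_induced_rng]
        apply continuous_pi
        intro x
        exact continuous_quotient_mk'.comp (continuous_mul_right (g x))
      have h0 : (0 : Γ →+ T) ∈ Set.range Φ := ⟨0, by ext x; simp [Φ]⟩
      have h1 : f ∈ Set.range Φ := ⟨1, by ext x; simp [Φ, hg x]⟩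
      have hpre' : IsPreconnected (Set.range Φ) := by
        rw [← Set.image_univ]
        exact isPreconnected_univ.image Φ hΦ.continuousOn
      exact hpre'.subset_connectedComponent h0 h1
    · -- connectedComponent 0 ⊆ ker
      intro f hf
      rw [SetLike.mem_coe, AddMonoidHom.mem_ker]
      ext x
      obtain ⟨n, hn, hnx⟩ := isOfFinAddOrder_iff_nsmul_eq_zero.mp x.2
      let ev : (Γ →+ T) → T := fun h => h (x : Γ)
      have hev : Continuous ev := (continuous_apply (x : Γ)).comp hcoe
      set C : Set T := ev '' connectedComponent 0 with hC
      have hCpre : IsPreconnected C :=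
        isPreconnected_connectedComponent.image ev hev.continuousOn
      have hCS : C ⊆ {y : T | n • y = 0} := by
        rintro y ⟨h, -, rfl⟩
        show n • h (x : Γ) = 0
        rw [← map_nsmul, hnx, map_zero]
      have hSfin : ({y : T | n • y = 0}).Finite := by
        have hsub : {y : T | n • y = 0} ⊆
            ⋃ d ∈ n.divisors, {u : T | addOrderOf u = d} := by
          intro y hy
          have hd : addOrderOf y ∣ n := addOrderOf_dvd_iff_nsmul_eq_zero.mpr hy
          have : addOrderOf y ∈ n.divisors := Nat.mem_divisors.mpr ⟨hd, hn.ne'⟩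
          exact Set.mem_biUnion this rfl
        refine Set.Finite.subset ?_ hsub
        refine Set.Finite.biUnion (Set.finite_Iic n |>.subset fun d hd =>
          Nat.le_of_dvd hn (Nat.mem_divisors.mp hd).1) ?_
        intro d hd
        haveI : Fact ((0:ℝ) < 1) := ⟨zero_lt_one⟩
        exact AddCircle.finite_setOfPred_addOrderOf_eq (p := (1 : ℝ)) (Nat.pos_of_mem_divisors hd)
      have hCfin : C.Finite := hSfin.subset hCS
      have h0C : (0 : T) ∈ C := ⟨0, mem_connectedComponent, by simp [ev]⟩
      have hfC : f (x : Γ) ∈ C := ⟨f, hf, rfl⟩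
      have hsub : C.Subsingleton := by
        by_contra hns
        rw [Set.not_subsingleton_iff] at hns
        exact (hCpre.infinite_of_nontrivial hns) hCfin
      have : f (x : Γ) = 0 := hsub hfC h0C
      simpa [hρapp] using this
  · exact ⟨QuotientAddGroup.quotientKerEquivOfSurjective ρ hsurj, fun f => rfl⟩
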